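/- Let G be a simple graph on n ≥ 4 vertices. Suppose that for every 4-element vertex subset S such that the subgraph of G induced on S is isomorphic to one of K_{1,2} ∪ K_1, K_3 ∪ K_1, K_{1,3}, K_{1,3}+e, or P_4, and for every pair of vertices x, y ∈ S that are nonadjacent in G, one has d(x) + d(y) ≥ n (degrees taken in G). If G has a vertex v with d(v) ≥ 2, then G is Hamiltonian. -/

import Mathlib

open SimpleGraph

/-- `K_{1,2} ∪ K_1`: a path on the vertices 0,1,2 together with the isolated vertex 3. -/
def pathUnionK1 : SimpleGraph (Fin 4) := SimpleGraph.fromEdgeSet {s(0, 1), s(1, 2)}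

/-- `K_3 ∪ K_1`: a triangle on the vertices 0,1,2 together with the isolated vertex 3. -/
def triangleUnionK1 : SimpleGraph (Fin 4) :=
  SimpleGraph.fromEdgeSet {s(0, 1), s(1, 2), s(0, 2)}

/-- `K_{1,3}`: the star with center 0 and leaves 1,2,3. -/
def star13 : SimpleGraph (Fin 4) := SimpleGraph.fromEdgeSet {s(0, 1), s(0, 2), s(0, 3)}

/-- `K_{1,3} + e` (the paw): the star `K_{1,3}` with an added edge between leaves 1 and 2. -/
def star13PlusE : SimpleGraph (Fin 4) :=
  SimpleGraph.fromEdgeSet {s(0, 1), s(0, 2), s(0, 3), s(1, 2)}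

/-- `P_4`: the path 0-1-2-3. -/
def path4 : SimpleGraph (Fin 4) := SimpleGraph.fromEdgeSet {s(0, 1), s(1, 2), s(2, 3)}

section OreTheorem
open Walk
variable {V : Type*} {G : SimpleGraph V}

variable {V : Type*} {G : SimpleGraph V}

lemma getVert_mem_support {u v : V} (p : G.Walk u v) (i : ℕ) : p.getVert i ∈ p.support := by
  induction p generalizing i with
  | nil => cases i <;> simp [Walk.getVert]
  | cons h q ih =>
    cases i with
    | zero => simp [Walk.getVert]
    | succ n => simp only [Walk.getVert_cons_succ, Walk.support_cons, List.mem_cons]; exact Or.inr (ih n)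

lemma getVert_injOn {u v : V} {p : G.Walk u v} (hp : p.IsPath) :
    ∀ i ≤ p.length, ∀ j ≤ p.length, p.getVert i = p.getVert j → i = j := by
  induction p with
  | nil => intro i hi j hj _; simp at hi hj; omega
  | cons h q ih =>
    rw [Walk.cons_isPath_iff] at hp
    intro i hi j hj hij
    rw [Walk.length_cons] at hi hj
    match i, j with
    | 0, 0 => rfl
    | 0, (j+1) =>
      exfalso
      rw [Walk.getVert_zero, Walk.getVert_cons_succ] at hij
      exact hp.2 (hij ▸ _root_.getVert_mem_support q j)
    | (i+1), 0 =>
      exfalso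
      rw [Walk.getVert_zero, Walk.getVert_cons_succ] at hij
      exact hp.2 (hij.symm ▸ _root_.getVert_mem_support q i)
    | (i+1), (j+1) =>
      rw [Walk.getVert_cons_succ, Walk.getVert_cons_succ] at hij
      have := ih hp.1 i (by omega) j (by omega) hij
      omega

lemma exists_getVert_of_mem_support {u v x : V} {p : G.Walk u v} (hx : x ∈ p.support) :
    ∃ i ≤ p.length, p.getVert i = x := by
  induction p with
  | nil =>
    simp only [Walk.support_nil, List.mem_singleton] at hx
    exact ⟨0, by simp, by simp [hx]⟩
  | cons h q ih =>
    rw [Walk.support_cons, List.mem_cons] at hx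
    rcases hx with rfl | hx
    · exact ⟨0, by simp, by simp⟩
    · obtain ⟨i, hi, hgi⟩ := ih hx
      exact ⟨i + 1, by simp only [Walk.length_cons]; omega,
        by simpa [Walk.getVert_cons_succ] using hgi⟩

lemma exists_split {u v : V} (p : G.Walk u v) :
    ∀ i ≤ p.length, ∃ (x : V) (q1 : G.Walk u x) (q2 : G.Walk x v),
      p = q1.append q2 ∧ q1.length = i ∧ x = p.getVert i := by
  induction p with
  | nil =>
    intro i hi
    simp only [Walk.length_nil, Nat.le_zero] at hi
    subst hi
    exact ⟨_, Walk.nil, Walk.nil, by simp, by simp, by simp⟩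
  | cons h q ih =>
    intro i hi
    cases i with
    | zero => exact ⟨_, Walk.nil, Walk.cons h q, by simp, by simp, by simp⟩
    | succ n =>
      rw [Walk.length_cons] at hi
      obtain ⟨x, q1, q2, heq, hlen, hx⟩ := ih n (by omega)
      exact ⟨x, Walk.cons h q1, q2, by rw [Walk.cons_append, ← heq], by simp [hlen],
        by simpa [Walk.getVert_cons_succ] using hx⟩

lemma edge_fst_eq_getVert_one {u v x : V} {p : G.Walk u v} (hp : p.IsPath)
    (he : s(x, u) ∈ p.edges) : x = p.getVert 1 := by
  cases p with
  | nil => simp at he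
  | cons h q =>
    rw [Walk.cons_isPath_iff] at hp
    rw [Walk.edges_cons, List.mem_cons] at he
    rcases he with he | he
    · rw [Sym2.eq_iff] at he
      rcases he with ⟨rfl, rfl⟩ | ⟨rfl, -⟩
      · simp [Walk.getVert_cons_succ]
      · simp [Walk.getVert_cons_succ]
    · exfalso
      rw [Sym2.eq_swap] at he
      exact hp.2 (Walk.fst_mem_support_of_mem_edges q he)

lemma common_neighbor [Fintype V] [DecidableEq V] [DecidableRel G.Adj] {x y : V}
    (hxy : x ≠ y) (hnadj : ¬ G.Adj x y) (hdeg : Fintype.card V ≤ G.degree x + G.degree y) :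
    ∃ z, G.Adj x z ∧ G.Adj y z := by
  have hsub : G.neighborFinset x ∪ G.neighborFinset y ⊆ Finset.univ \ {x, y} := by
    intro z hz
    simp only [Finset.mem_union, mem_neighborFinset] at hz
    simp only [Finset.mem_sdiff, Finset.mem_univ, Finset.mem_insert, Finset.mem_singleton,
      true_and]
    push_neg
    rcases hz with hz | hz
    · exact ⟨fun h => G.irrefl (h ▸ hz), fun h => hnadj (h ▸ hz)⟩
    · exact ⟨fun h => hnadj (h ▸ hz.symm), fun h => G.irrefl (h ▸ hz)⟩
  have hcard : (G.neighborFinset x ∪ G.neighborFinset y).card ≤ Fintype.card V - 2 := by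
    calc _ ≤ (Finset.univ \ ({x, y} : Finset V)).card := Finset.card_le_card hsub
    _ = Fintype.card V - 2 := by
        rw [Finset.card_sdiff_of_subset (Finset.subset_univ _), Finset.card_univ,
          Finset.card_insert_of_notMem (by simpa using hxy), Finset.card_singleton]
  have hiu := Finset.card_union_add_card_inter (G.neighborFinset x) (G.neighborFinset y)
  have hdx := G.degree_lt_card_verts x
  rw [card_neighborFinset_eq_degree, card_neighborFinset_eq_degree] at hiu
  have hpos : 0 < (G.neighborFinset x ∩ G.neighborFinset y).card := by omega
  obtain ⟨z, hz⟩ := Finset.card_pos.mp hpos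
  rw [Finset.mem_inter, mem_neighborFinset, mem_neighborFinset] at hz
  exact ⟨z, hz⟩

theorem ore_hamiltonian [Fintype V] [DecidableEq V] (G : SimpleGraph V) [DecidableRel G.Adj]
    (hn : 3 ≤ Fintype.card V)
    (hore : ∀ x y : V, x ≠ y → ¬ G.Adj x y → Fintype.card V ≤ G.degree x + G.degree y) :
    G.IsHamiltonian := by
  classical
  intro _hcard
  have hne : Nonempty V := Fintype.card_pos_iff.mp (by omega)
  obtain ⟨v0⟩ := hne
  set n := Fintype.card V with hndef
  -- maximal path
  let Pl : ℕ → Prop := fun ℓ => ∃ (a b : V) (p : G.Walk a b), p.IsPath ∧ p.length = ℓ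
  have hP0 : Pl 0 := ⟨v0, v0, Walk.nil, Walk.IsPath.nil, rfl⟩
  set L := Nat.findGreatest Pl n with hLdef
  have hPL : Pl L := Nat.findGreatest_spec (Nat.zero_le _) hP0
  have hmax : ∀ (c d : V) (q : G.Walk c d), q.IsPath → q.length ≤ L := by
    intro c d q hq
    exact Nat.le_findGreatest hq.length_lt.le ⟨c, d, q, hq, rfl⟩
  obtain ⟨a, b, p, hp, hpl⟩ := hPL
  have hnbra : ∀ x, G.Adj a x → x ∈ p.support := by
    intro x hx
    by_contra hxs
    have hQ : (Walk.cons hx.symm p).IsPath := hp.cons hxs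
    have := hmax _ _ _ hQ
    rw [Walk.length_cons, hpl] at this
    omega
  have hnbrb : ∀ x, G.Adj b x → x ∈ p.support := by
    intro x hx
    by_contra hxs
    have hxs' : x ∉ p.reverse.support := by simpa using hxs
    have hQ : (Walk.cons hx.symm p.reverse).IsPath := hp.reverse.cons hxs'
    have := hmax _ _ _ hQ
    rw [Walk.length_cons, Walk.length_reverse, hpl] at this
    omega
  have hsupmem : ∀ x ∈ p.support, ∃ i ≤ L, p.getVert i = x := by
    intro x hx
    obtain ⟨i, hi, hgi⟩ := exists_getVert_of_mem_support hx
    exact ⟨i, hpl ▸ hi, hgi⟩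
  -- rule out tiny maximal lengths
  have hL1 : 1 ≤ L := by
    by_contra hL0
    have hL0 : L = 0 := by omega
    obtain ⟨y, hy⟩ := Fintype.exists_ne_of_one_lt_card (by omega) a
    have hyadj : ¬ G.Adj a y := by
      intro h
      obtain ⟨i, hi, hgi⟩ := hsupmem y (hnbra y h)
      rw [hL0, Nat.le_zero] at hi
      subst hi
      rw [p.getVert_zero] at hgi
      exact G.irrefl (hgi ▸ h)
    obtain ⟨z, hz1, hz2⟩ := common_neighbor (Ne.symm hy) hyadj (hore a y (Ne.symm hy) hyadj)
    obtain ⟨i, hi, hgi⟩ := hsupmem z (hnbra z hz1)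
    rw [hL0, Nat.le_zero] at hi
    subst hi
    rw [p.getVert_zero] at hgi
    exact G.irrefl (hgi ▸ hz1)
  have hL2 : 2 ≤ L := by
    by_contra hLlt
    have hL1' : L = 1 := by omega
    have hab : G.Adj a b := by
      have := p.adj_getVert_succ (i := 0) (by omega)
      rw [p.getVert_zero] at this
      have h1 : p.getVert 1 = b := by
        have := p.getVert_length
        rwa [hpl, hL1'] at this
      rwa [h1] at this
    have hsup2 : ∀ x ∈ p.support, x = a ∨ x = b := by
      intro x hx
      obtain ⟨i, hi, hgi⟩ := hsupmem x hx
      rw [hL1'] at hi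
      interval_cases i
      · left; rw [← hgi, p.getVert_zero]
      · have hb : p.getVert 1 = b := by
          have h := p.getVert_length
          rwa [hpl, hL1'] at h
        right; rw [← hgi]; exact hb
    obtain ⟨y, hy⟩ : ∃ y, y ≠ a ∧ y ≠ b := by
      have hcompl : (({a, b} : Finset V)ᶜ).Nonempty := by
        rw [← Finset.card_pos, Finset.card_compl]
        have h2 : ({a, b} : Finset V).card ≤ 2 := (Finset.card_insert_le _ _).trans (by simp)
        omega
      obtain ⟨y, hy⟩ := hcompl
      simp only [Finset.mem_compl, Finset.mem_insert, Finset.mem_singleton] at hy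
      push_neg at hy
      exact ⟨y, hy⟩
    have hya : ¬ G.Adj a y := by
      intro h
      rcases hsup2 y (hnbra y h) with rfl | rfl
      · exact hy.1 rfl
      · exact hy.2 rfl
    obtain ⟨z, hz1, hz2⟩ := common_neighbor (Ne.symm hy.1) hya (hore a y (Ne.symm hy.1) hya)
    rcases hsup2 z (hnbra z hz1) with rfl | rfl
    · exact G.irrefl hz1
    · rcases hsup2 y (hnbrb y hz2.symm) with rfl | rfl
      · exact hy.1 rfl
      · exact hy.2 rfl
  -- the key cycle
  suffices hcyc : ∃ (r : V) (c : G.Walk r r), c.IsCycle ∧ c.support.tail.Perm p.support by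
    obtain ⟨r, c, hccyc, hcs⟩ := hcyc
    have hall : ∀ z : V, z ∈ p.support := by
      by_contra hz
      push_neg at hz
      obtain ⟨y, hy⟩ := hz
      obtain ⟨z, u', hzu, hzns, hu's⟩ :
          ∃ z u', G.Adj z u' ∧ z ∉ p.support ∧ u' ∈ p.support := by
        by_cases hya : G.Adj y a
        · exact ⟨y, a, hya, hy, p.start_mem_support⟩
        · have hyne : y ≠ a := by rintro rfl; exact hy p.start_mem_support
          obtain ⟨t, ht1, ht2⟩ := common_neighbor hyne hya (hore y a hyne hya)
          by_cases ht : t ∈ p.support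
          · exact ⟨y, t, ht1, hy, ht⟩
          · exact ⟨t, a, ht2.symm, ht, p.start_mem_support⟩
      have hu'c : u' ∈ c.support := by
        rw [c.support_eq_cons]
        exact List.mem_cons_of_mem _ (hcs.mem_iff.mpr hu's)
      have hc'cyc := hccyc.rotate hu'c
      have hc'nil : ¬ (c.rotate u' hu'c).Nil := hc'cyc.not_nil
      have hts : (c.rotate u' hu'c).tail.support = (c.rotate u' hu'c).support.tail :=
        Walk.support_tail_of_not_nil _ hc'nil
      have hperm2 : (c.rotate u' hu'c).tail.support.Perm p.support := by
        rw [hts]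
        exact ((c.support_rotate u' hu'c).perm).trans hcs
      have hnodup : (c.rotate u' hu'c).tail.support.Nodup :=
        hperm2.nodup_iff.mpr hp.support_nodup
      have hQpath : (Walk.cons hzu (c.rotate u' hu'c).tail.reverse).IsPath := by
        rw [Walk.isPath_def, Walk.support_cons, Walk.support_reverse]
        refine List.nodup_cons.mpr ⟨?_, (List.nodup_reverse.mpr hnodup)⟩
        rw [List.mem_reverse]
        intro hmem
        exact hzns (hperm2.mem_iff.mp hmem)
      have := hmax _ _ _ hQpath
      rw [Walk.length_cons, Walk.length_reverse] at this
      have hlen : (c.rotate u' hu'c).tail.support.length = p.support.length := hperm2.length_eq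
      rw [Walk.length_support, Walk.length_support, hpl] at hlen
      omega
    refine ⟨r, c, (Walk.isHamiltonianCycle_iff_isCycle_and_support_count_tail_eq_one).mpr
      ⟨hccyc, fun z => ?_⟩⟩
    rw [hcs.count_eq]
    exact List.count_eq_one_of_mem hp.support_nodup (hall z)
  by_cases hab : G.Adj a b
  · -- easy case: close up the path
    refine ⟨b, Walk.cons hab.symm p, ?_, by simp⟩
    rw [Walk.cons_isCycle_iff]
    refine ⟨hp, fun he => ?_⟩
    have hb1 : b = p.getVert 1 := edge_fst_eq_getVert_one hp he
    have hbL : p.getVert L = b := by rw [← hpl]; exact p.getVert_length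
    have := getVert_injOn hp L (by omega) 1 (by omega) (by rw [hbL, ← hb1])
    omega
  · -- crossover case
    have hanb : a ≠ b := by
      intro heq
      have h0 : p.getVert 0 = p.getVert L := by
        rw [p.getVert_zero, ← hpl, p.getVert_length, heq]
      have := getVert_injOn hp 0 (by omega) L (by omega) h0
      omega
    -- pigeonhole sets
    set A : Finset ℕ := (Finset.range L).filter (fun i => G.Adj a (p.getVert (i + 1))) with hAdef
    set B : Finset ℕ := (Finset.range L).filter (fun i => G.Adj b (p.getVert i)) with hBdef
    have hcardA : A.card = G.degree a := by
      rw [← card_neighborFinset_eq_degree]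
      apply Finset.card_bij (fun i _ => p.getVert (i + 1))
      · intro i hi
        rw [hAdef, Finset.mem_filter] at hi
        rw [mem_neighborFinset]
        exact hi.2
      · intro i hi j hj hij
        rw [hAdef, Finset.mem_filter, Finset.mem_range] at hi hj
        have := getVert_injOn hp (i + 1) (by omega) (j + 1) (by omega) hij
        omega
      · intro x hx
        rw [mem_neighborFinset] at hx
        obtain ⟨j, hj, hgj⟩ := hsupmem x (hnbra x hx)
        have hj0 : j ≠ 0 := by
          intro h0
          rw [h0, p.getVert_zero] at hgj
          exact G.irrefl (hgj ▸ hx)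
        refine ⟨j - 1, ?_, by rw [(by omega : j - 1 + 1 = j)]; exact hgj⟩
        rw [hAdef, Finset.mem_filter, Finset.mem_range]
        refine ⟨by omega, ?_⟩
        rw [(by omega : j - 1 + 1 = j)]
        exact hgj ▸ hx
    have hcardB : B.card = G.degree b := by
      rw [← card_neighborFinset_eq_degree]
      apply Finset.card_bij (fun i _ => p.getVert i)
      · intro i hi
        rw [hBdef, Finset.mem_filter] at hi
        rw [mem_neighborFinset]
        exact hi.2
      · intro i hi j hj hij
        rw [hBdef, Finset.mem_filter, Finset.mem_range] at hi hj
        have := getVert_injOn hp i (by omega) j (by omega) hij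
        omega
      · intro x hx
        rw [mem_neighborFinset] at hx
        obtain ⟨j, hj, hgj⟩ := hsupmem x (hnbrb x hx)
        have hjL : j ≠ L := by
          intro h0
          rw [h0, ← hpl, p.getVert_length] at hgj
          exact G.irrefl (hgj ▸ hx)
        refine ⟨j, ?_, hgj⟩
        rw [hBdef, Finset.mem_filter, Finset.mem_range]
        exact ⟨by omega, hgj ▸ hx⟩
    have hunion : (A ∪ B).card ≤ L := by
      calc (A ∪ B).card ≤ (Finset.range L).card := Finset.card_le_card (by
        intro i hi
        rw [Finset.mem_union, hAdef, hBdef, Finset.mem_filter, Finset.mem_filter] at hi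
        rcases hi with hi | hi <;> exact hi.1)
      _ = L := Finset.card_range L
    have hLn : L + 1 ≤ n := by
      have := hp.length_lt
      rw [hpl] at this
      omega
    have hiAB : (A ∩ B).Nonempty := by
      rw [← Finset.card_pos]
      have h1 := Finset.card_union_add_card_inter A B
      have h2 := hore a b hanb hab
      omega
    obtain ⟨i, hiI⟩ := hiAB
    rw [Finset.mem_inter, hAdef, hBdef, Finset.mem_filter, Finset.mem_filter,
      Finset.mem_range] at hiI
    obtain ⟨⟨hiL, hA⟩, -, hB⟩ := hiI
    have hi1 : 1 ≤ i := by
      rcases Nat.eq_zero_or_pos i with h0 | h; swap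
      · exact h
      · exfalso
        rw [h0, p.getVert_zero] at hB
        exact hab hB.symm
    have hi2 : i + 1 < L := by
      rcases Nat.lt_or_ge (i+1) L with h | h
      · exact h
      · exfalso
        have hiL' : i + 1 = L := by omega
        rw [hiL', ← hpl, p.getVert_length] at hA
        exact hab hA
    obtain ⟨x, q1, q2, heq, hq1len, hxval⟩ := exists_split p i (by omega)
    have hq2len : q2.length = L - i := by
      have hl := congrArg Walk.length heq
      rw [Walk.length_append] at hl
      omega
    have hq2nil : ¬ q2.Nil := Walk.not_nil_iff_lt_length.mpr (by omega)
    have hw : q2.getVert 1 = p.getVert (i + 1) := by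
      rw [heq, Walk.getVert_append, hq1len, if_neg (by omega), (by omega : i + 1 - i = 1)]
    have hub : G.Adj x b := by rw [hxval]; exact hB.symm
    have haw : G.Adj a (q2.getVert 1) := by rw [hw]; exact hA
    have hq2eq : Walk.cons (q2.adj_snd hq2nil) q2.tail = q2 := Walk.cons_tail_eq q2 hq2nil
    have hP'supp : (q1.append (Walk.cons hub q2.tail.reverse)).support
        = q1.support ++ q2.tail.support.reverse := by
      rw [Walk.support_append, Walk.support_cons, List.tail_cons, Walk.support_reverse]
    have hpsupp : p.support = q1.support ++ q2.tail.support := by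
      rw [heq, Walk.support_append]
      congr 1
      conv_lhs => rw [← hq2eq]
      rw [Walk.support_cons, List.tail_cons]
    have hperm : (q1.append (Walk.cons hub q2.tail.reverse)).support.Perm p.support := by
      rw [hP'supp, hpsupp]
      exact List.Perm.append_left _ (List.reverse_perm _)
    have hP'path : (q1.append (Walk.cons hub q2.tail.reverse)).IsPath := by
      rw [Walk.isPath_def]
      exact hperm.nodup_iff.mpr hp.support_nodup
    refine ⟨q2.getVert 1, Walk.cons haw.symm (q1.append (Walk.cons hub q2.tail.reverse)), ?_, ?_⟩
    · rw [Walk.cons_isCycle_iff]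
      refine ⟨hP'path, fun he => ?_⟩
      have h1 : q2.getVert 1 = (q1.append (Walk.cons hub q2.tail.reverse)).getVert 1 :=
        edge_fst_eq_getVert_one hP'path he
      have hP'1 : (q1.append (Walk.cons hub q2.tail.reverse)).getVert 1 = p.getVert 1 := by
        rcases Nat.lt_or_ge 1 i with hlt | hge
        · rw [Walk.getVert_append, hq1len, if_pos hlt, heq, Walk.getVert_append, hq1len,
            if_pos hlt]
        · have hi1' : i = 1 := by omega
          rw [Walk.getVert_append, hq1len, if_neg (by omega), (by omega : 1 - i = 0),
            Walk.getVert_zero, hxval, hi1']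
      have hww : p.getVert (i + 1) = p.getVert 1 := by rw [← hw, h1, hP'1]
      have := getVert_injOn hp (i + 1) (by omega) 1 (by omega) hww
      omega
    · rw [Walk.support_cons, List.tail_cons]
      exact hperm

end OreTheorem

section Helper
variable {V : Type*}

lemma induce_iso_of_four [DecidableEq V] (G : SimpleGraph V) (H : SimpleGraph (Fin 4))
    (x0 x1 x2 x3 : V)
    (h01 : x0 ≠ x1) (h02 : x0 ≠ x2) (h03 : x0 ≠ x3) (h12 : x1 ≠ x2) (h13 : x1 ≠ x3)
    (h23 : x2 ≠ x3)
    (a01 : G.Adj x0 x1 ↔ H.Adj 0 1) (a02 : G.Adj x0 x2 ↔ H.Adj 0 2)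
    (a03 : G.Adj x0 x3 ↔ H.Adj 0 3) (a12 : G.Adj x1 x2 ↔ H.Adj 1 2)
    (a13 : G.Adj x1 x3 ↔ H.Adj 1 3) (a23 : G.Adj x2 x3 ↔ H.Adj 2 3) :
    ({x0, x1, x2, x3} : Finset V).card = 4 ∧
      Nonempty (G.induce (({x0, x1, x2, x3} : Finset V) : Set V) ≃g H) := by
  constructor
  · rw [Finset.card_insert_of_notMem (by simp [h01, h02, h03]),
      Finset.card_insert_of_notMem (by simp [h12, h13]),
      Finset.card_insert_of_notMem (by simp [h23]), Finset.card_singleton]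
  · set S : Finset V := {x0, x1, x2, x3} with hS
    let f : Fin 4 → V := ![x0, x1, x2, x3]
    have hmem : ∀ i : Fin 4, f i ∈ (S : Set V) := by
      intro i
      fin_cases i <;> simp [f, hS]
    let g : Fin 4 → (S : Set V) := fun i => ⟨f i, hmem i⟩
    have hginj : Function.Injective g := by
      intro i j hij
      have h' : f i = f j := Subtype.ext_iff.mp hij
      fin_cases i <;> fin_cases j <;> simp_all [f]
    have hgsurj : Function.Surjective g := by
      rintro ⟨x, hx⟩
      simp only [hS, Finset.coe_insert, Set.mem_insert_iff, Finset.coe_singleton,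
        Set.mem_singleton_iff] at hx
      rcases hx with rfl | rfl | rfl | rfl
      · exact ⟨0, rfl⟩
      · exact ⟨1, rfl⟩
      · exact ⟨2, rfl⟩
      · exact ⟨3, rfl⟩
    let e : Fin 4 ≃ (S : Set V) := Equiv.ofBijective g ⟨hginj, hgsurj⟩
    refine ⟨(⟨e, ?_⟩ : H ≃g G.induce (S : Set V)).symm⟩
    intro i j
    show (G.induce (S : Set V)).Adj (g i) (g j) ↔ H.Adj i j
    simp only [comap_adj, Function.Embedding.coe_subtype]
    fin_cases i <;> fin_cases j <;>
      simp only [f, g, Matrix.cons_val_zero, Matrix.cons_val_one, Matrix.head_cons,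
        Matrix.cons_val_two, Matrix.tail_cons, Matrix.cons_val_three] <;>
      first
        | exact iff_of_false (G.irrefl) (H.irrefl)
        | exact a01 | exact a02 | exact a03 | exact a12 | exact a13 | exact a23
        | exact (G.adj_comm _ _).trans (a01.trans (H.adj_comm _ _))
        | exact (G.adj_comm _ _).trans (a02.trans (H.adj_comm _ _))
        | exact (G.adj_comm _ _).trans (a03.trans (H.adj_comm _ _))
        | exact (G.adj_comm _ _).trans (a12.trans (H.adj_comm _ _))
        | exact (G.adj_comm _ _).trans (a13.trans (H.adj_comm _ _))
        | exact (G.adj_comm _ _).trans (a23.trans (H.adj_comm _ _))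

end Helper

set_option maxHeartbeats 1000000 in
/-- **Theorem 1.** Let `G` be a graph on `n ≥ 4` vertices satisfying `d(x) + d(y) ≥ n` for
each pair of nonadjacent vertices `x, y` of every 4-element induced subgraph isomorphic to
`K_{1,2} ∪ K_1`, `K_3 ∪ K_1`, `K_{1,3}`, `K_{1,3} + e` or `P_4`. If `G` has a vertex `v`
with `d(v) ≥ 2`, then `G` is Hamiltonian. -/
theorem stmt0 {V : Type*} [Fintype V] [DecidableEq V]
    (G : SimpleGraph V) [DecidableRel G.Adj]
    (hn : 4 ≤ Fintype.card V)
    (hcond : ∀ S : Finset V, S.card = 4 →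
      (Nonempty (G.induce (S : Set V) ≃g pathUnionK1) ∨
       Nonempty (G.induce (S : Set V) ≃g triangleUnionK1) ∨
       Nonempty (G.induce (S : Set V) ≃g star13) ∨
       Nonempty (G.induce (S : Set V) ≃g star13PlusE) ∨
       Nonempty (G.induce (S : Set V) ≃g path4)) →
      ∀ x ∈ S, ∀ y ∈ S, x ≠ y → ¬ G.Adj x y →
        Fintype.card V ≤ G.degree x + G.degree y)
    (v : V) (hv : 2 ≤ G.degree v) :
    G.IsHamiltonian := by
  classical
  have use4 : ∀ (x0 x1 x2 x3 : V) (H : SimpleGraph (Fin 4)),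
      (H = pathUnionK1 ∨ H = triangleUnionK1 ∨ H = star13 ∨ H = star13PlusE ∨ H = path4) →
      x0 ≠ x1 → x0 ≠ x2 → x0 ≠ x3 → x1 ≠ x2 → x1 ≠ x3 → x2 ≠ x3 →
      (G.Adj x0 x1 ↔ H.Adj 0 1) → (G.Adj x0 x2 ↔ H.Adj 0 2) → (G.Adj x0 x3 ↔ H.Adj 0 3) →
      (G.Adj x1 x2 ↔ H.Adj 1 2) → (G.Adj x1 x3 ↔ H.Adj 1 3) → (G.Adj x2 x3 ↔ H.Adj 2 3) →
      ∀ x ∈ ({x0, x1, x2, x3} : Finset V), ∀ y ∈ ({x0, x1, x2, x3} : Finset V),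
        x ≠ y → ¬ G.Adj x y → Fintype.card V ≤ G.degree x + G.degree y := by
    intro x0 x1 x2 x3 H hH h01 h02 h03 h12 h13 h23 a01 a02 a03 a12 a13 a23
    obtain ⟨hcard, hiso⟩ := induce_iso_of_four G H x0 x1 x2 x3 h01 h02 h03 h12 h13 h23
      a01 a02 a03 a12 a13 a23
    refine hcond _ hcard ?_
    rcases hH with rfl | rfl | rfl | rfl | rfl
    · exact Or.inl hiso
    · exact Or.inr (Or.inl hiso)
    · exact Or.inr (Or.inr (Or.inl hiso))
    · exact Or.inr (Or.inr (Or.inr (Or.inl hiso)))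
    · exact Or.inr (Or.inr (Or.inr (Or.inr hiso)))
  obtain ⟨aa, bb, hva, hvb, habne⟩ : ∃ a b, G.Adj v a ∧ G.Adj v b ∧ a ≠ b := by
    have h1 : 1 < (G.neighborFinset v).card := by
      rw [card_neighborFinset_eq_degree]; omega
    obtain ⟨a, ha, b, hb, hab⟩ := Finset.one_lt_card.mp h1
    exact ⟨a, b, (mem_neighborFinset _ _ _).mp ha, (mem_neighborFinset _ _ _).mp hb, hab⟩
  -- no isolated vertices
  have hdeg_pos : ∀ x : V, ∃ z, G.Adj x z := by
    intro x
    by_contra hx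
    push_neg at hx
    have hdx : G.degree x = 0 := by
      rw [← card_neighborFinset_eq_degree, Finset.card_eq_zero]
      exact Finset.eq_empty_iff_forall_notMem.mpr
        (fun z hz => hx z ((mem_neighborFinset _ _ _).mp hz))
    have hxv : x ≠ v := fun h => hx aa (h ▸ hva)
    have hxa : x ≠ aa := fun h => hx v (by rw [h]; exact hva.symm)
    have hxb : x ≠ bb := fun h => hx v (by rw [h]; exact hvb.symm)
    have hkey : Fintype.card V ≤ G.degree x + G.degree v := by
      by_cases habb : G.Adj aa bb
      · exact use4 aa v bb x triangleUnionK1 (by tauto)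
          (G.ne_of_adj hva).symm habne hxa.symm (G.ne_of_adj hvb) hxv.symm hxb.symm
          (iff_of_true hva.symm (by simp [triangleUnionK1]))
          (iff_of_true habb (by simp [triangleUnionK1]))
          (iff_of_false (fun h => hx aa h.symm) (by simp [triangleUnionK1]))
          (iff_of_true hvb (by simp [triangleUnionK1]))
          (iff_of_false (fun h => hx v h.symm) (by simp [triangleUnionK1]))
          (iff_of_false (fun h => hx bb h.symm) (by simp [triangleUnionK1]))
          x (by simp) v (by simp) hxv (fun h => hx v h)
      · exact use4 aa v bb x pathUnionK1 (by tauto)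
          (G.ne_of_adj hva).symm habne hxa.symm (G.ne_of_adj hvb) hxv.symm hxb.symm
          (iff_of_true hva.symm (by simp [pathUnionK1]))
          (iff_of_false habb (by simp [pathUnionK1]))
          (iff_of_false (fun h => hx aa h.symm) (by simp [pathUnionK1]))
          (iff_of_true hvb (by simp [pathUnionK1]))
          (iff_of_false (fun h => hx v h.symm) (by simp [pathUnionK1]))
          (iff_of_false (fun h => hx bb h.symm) (by simp [pathUnionK1]))
          x (by simp) v (by simp) hxv (fun h => hx v h)
    have := G.degree_lt_card_verts v
    omega
  have hore : ∀ x y : V, x ≠ y → ¬ G.Adj x y →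
      Fintype.card V ≤ G.degree x + G.degree y := by
    intro x y hxy hnadj
    by_cases hcn : ∃ z, G.Adj x z ∧ G.Adj y z
    · obtain ⟨z, hz1, hz2⟩ := hcn
      have hzx : z ≠ x := (G.ne_of_adj hz1).symm
      have hzy : z ≠ y := (G.ne_of_adj hz2).symm
      by_cases hw : ∃ w, w ≠ x ∧ w ≠ y ∧ w ≠ z ∧ ¬(G.Adj w x ∧ G.Adj w y)
      · obtain ⟨w, hwx, hwy, hwz, hwn⟩ := hw
        by_cases bwx : G.Adj w x <;> by_cases bwy : G.Adj w y <;> by_cases bwz : G.Adj w z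
        · exact absurd ⟨bwx, bwy⟩ hwn
        · exact absurd ⟨bwx, bwy⟩ hwn
        · -- wx, ¬wy, wz : paw (z,x,w,y)
          exact use4 z x w y star13PlusE (by tauto)
            hzx hwz.symm hzy hwx.symm hxy hwy
            (iff_of_true hz1.symm (by simp [star13PlusE]))
            (iff_of_true bwz.symm (by simp [star13PlusE]))
            (iff_of_true hz2.symm (by simp [star13PlusE]))
            (iff_of_true bwx.symm (by simp [star13PlusE]))
            (iff_of_false hnadj (by simp [star13PlusE]))
            (iff_of_false bwy (by simp [star13PlusE]))
            x (by simp) y (by simp) hxy hnadj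
        · -- wx, ¬wy, ¬wz : path4 (w,x,z,y)
          exact use4 w x z y path4 (by tauto)
            hwx hwz hwy hzx.symm hxy hzy
            (iff_of_true bwx (by simp [path4]))
            (iff_of_false bwz (by simp [path4]))
            (iff_of_false bwy (by simp [path4]))
            (iff_of_true hz1 (by simp [path4]))
            (iff_of_false hnadj (by simp [path4]))
            (iff_of_true hz2.symm (by simp [path4]))
            x (by simp) y (by simp) hxy hnadj
        · -- ¬wx, wy, wz : paw (z,y,w,x)
          exact use4 z y w x star13PlusE (by tauto)
            hzy hwz.symm hzx hwy.symm hxy.symm hwx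
            (iff_of_true hz2.symm (by simp [star13PlusE]))
            (iff_of_true bwz.symm (by simp [star13PlusE]))
            (iff_of_true hz1.symm (by simp [star13PlusE]))
            (iff_of_true bwy.symm (by simp [star13PlusE]))
            (iff_of_false (fun h => hnadj h.symm) (by simp [star13PlusE]))
            (iff_of_false bwx (by simp [star13PlusE]))
            x (by simp) y (by simp) hxy hnadj
        · -- ¬wx, wy, ¬wz : path4 (w,y,z,x)
          exact use4 w y z x path4 (by tauto)
            hwy hwz hwx hzy.symm hxy.symm hzx
            (iff_of_true bwy (by simp [path4]))
            (iff_of_false bwz (by simp [path4]))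
            (iff_of_false bwx (by simp [path4]))
            (iff_of_true hz2 (by simp [path4]))
            (iff_of_false (fun h => hnadj h.symm) (by simp [path4]))
            (iff_of_true hz1.symm (by simp [path4]))
            x (by simp) y (by simp) hxy hnadj
        · -- ¬wx, ¬wy, wz : star13 (z,x,y,w)
          exact use4 z x y w star13 (by tauto)
            hzx hzy hwz.symm hxy hwx.symm hwy.symm
            (iff_of_true hz1.symm (by simp [star13]))
            (iff_of_true hz2.symm (by simp [star13]))
            (iff_of_true bwz.symm (by simp [star13]))
            (iff_of_false hnadj (by simp [star13]))
            (iff_of_false (fun h => bwx h.symm) (by simp [star13]))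
            (iff_of_false (fun h => bwy h.symm) (by simp [star13]))
            x (by simp) y (by simp) hxy hnadj
        · -- ¬wx, ¬wy, ¬wz : P3 ∪ K1 (x,z,y,w)
          exact use4 x z y w pathUnionK1 (by tauto)
            hzx.symm hxy hwx.symm hzy hwz.symm hwy.symm
            (iff_of_true hz1 (by simp [pathUnionK1]))
            (iff_of_false hnadj (by simp [pathUnionK1]))
            (iff_of_false (fun h => bwx h.symm) (by simp [pathUnionK1]))
            (iff_of_true hz2.symm (by simp [pathUnionK1]))
            (iff_of_false (fun h => bwz h.symm) (by simp [pathUnionK1]))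
            (iff_of_false (fun h => bwy h.symm) (by simp [pathUnionK1]))
            x (by simp) y (by simp) hxy hnadj
      · -- every other vertex adjacent to both x and y
        push_neg at hw
        have hdegx : Fintype.card V - 2 ≤ G.degree x := by
          have hsub : insert z (Finset.univ \ {x, y, z}) ⊆ G.neighborFinset x := by
            intro w hwm
            rw [Finset.mem_insert] at hwm
            rw [mem_neighborFinset]
            rcases hwm with rfl | hwm
            · exact hz1
            · simp only [Finset.mem_sdiff, Finset.mem_univ, Finset.mem_insert,
                Finset.mem_singleton, true_and] at hwm
              push_neg at hwm
              exact ((hw w hwm.1 hwm.2.1 hwm.2.2).1).symm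
          have hcard : (insert z (Finset.univ \ {x, y, z})).card = Fintype.card V - 2 := by
            rw [Finset.card_insert_of_notMem (by simp), Finset.card_sdiff_of_subset (Finset.subset_univ _),
              Finset.card_univ, Finset.card_insert_of_notMem (by simp [hxy, hzx.symm]),
              Finset.card_insert_of_notMem (by simp [hzy.symm]), Finset.card_singleton]
            have h4 : 4 ≤ Fintype.card V := hn
            omega
          calc Fintype.card V - 2 = (insert z (Finset.univ \ {x, y, z})).card := hcard.symm
          _ ≤ (G.neighborFinset x).card := Finset.card_le_card hsub
          _ = G.degree x := card_neighborFinset_eq_degree _ _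
        have hdegy : Fintype.card V - 2 ≤ G.degree y := by
          have hsub : insert z (Finset.univ \ {x, y, z}) ⊆ G.neighborFinset y := by
            intro w hwm
            rw [Finset.mem_insert] at hwm
            rw [mem_neighborFinset]
            rcases hwm with rfl | hwm
            · exact hz2
            · simp only [Finset.mem_sdiff, Finset.mem_univ, Finset.mem_insert,
                Finset.mem_singleton, true_and] at hwm
              push_neg at hwm
              exact ((hw w hwm.1 hwm.2.1 hwm.2.2).2).symm
          have hcard : (insert z (Finset.univ \ {x, y, z})).card = Fintype.card V - 2 := by
            rw [Finset.card_insert_of_notMem (by simp), Finset.card_sdiff_of_subset (Finset.subset_univ _),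
              Finset.card_univ, Finset.card_insert_of_notMem (by simp [hxy, hzx.symm]),
              Finset.card_insert_of_notMem (by simp [hzy.symm]), Finset.card_singleton]
            have h4 : 4 ≤ Fintype.card V := hn
            omega
          calc Fintype.card V - 2 = (insert z (Finset.univ \ {x, y, z})).card := hcard.symm
          _ ≤ (G.neighborFinset y).card := Finset.card_le_card hsub
          _ = G.degree y := card_neighborFinset_eq_degree _ _
        omega
    · -- no common neighbor
      obtain ⟨z, hxz⟩ := hdeg_pos x
      have hyz : ¬ G.Adj y z := fun h => hcn ⟨z, hxz, h⟩
      have hzy : z ≠ y := fun h => hnadj (h ▸ hxz)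
      have hzx : z ≠ x := (G.ne_of_adj hxz).symm
      by_cases hw : ∃ w, w ≠ x ∧ w ≠ y ∧ w ≠ z ∧ (G.Adj w x ∨ G.Adj w z)
      · obtain ⟨w, hwx, hwy, hwz, hor⟩ := hw
        by_cases bwx : G.Adj w x <;> by_cases bwz : G.Adj w z <;> by_cases bwy : G.Adj w y
        · -- wx, wz, wy : paw (w,x,z,y)
          exact use4 w x z y star13PlusE (by tauto)
            hwx hwz hwy hzx.symm hxy hzy
            (iff_of_true bwx (by simp [star13PlusE]))
            (iff_of_true bwz (by simp [star13PlusE]))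
            (iff_of_true bwy (by simp [star13PlusE]))
            (iff_of_true hxz (by simp [star13PlusE]))
            (iff_of_false hnadj (by simp [star13PlusE]))
            (iff_of_false (fun h => hyz h.symm) (by simp [star13PlusE]))
            x (by simp) y (by simp) hxy hnadj
        · -- wx, wz, ¬wy : triangle ∪ K1 (x,z,w,y)
          exact use4 x z w y triangleUnionK1 (by tauto)
            hzx.symm hwx.symm hxy hwz.symm hzy hwy
            (iff_of_true hxz (by simp [triangleUnionK1]))
            (iff_of_true bwx.symm (by simp [triangleUnionK1]))
            (iff_of_false hnadj (by simp [triangleUnionK1]))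
            (iff_of_true bwz.symm (by simp [triangleUnionK1]))
            (iff_of_false (fun h => hyz h.symm) (by simp [triangleUnionK1]))
            (iff_of_false bwy (by simp [triangleUnionK1]))
            x (by simp) y (by simp) hxy hnadj
        · -- wx, ¬wz, wy : path4 (z,x,w,y)
          exact use4 z x w y path4 (by tauto)
            hzx hwz.symm hzy hwx.symm hxy hwy
            (iff_of_true hxz.symm (by simp [path4]))
            (iff_of_false (fun h => bwz h.symm) (by simp [path4]))
            (iff_of_false (fun h => hyz h.symm) (by simp [path4]))
            (iff_of_true bwx.symm (by simp [path4]))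
            (iff_of_false hnadj (by simp [path4]))
            (iff_of_true bwy (by simp [path4]))
            x (by simp) y (by simp) hxy hnadj
        · -- wx, ¬wz, ¬wy : P3 ∪ K1 (z,x,w,y)
          exact use4 z x w y pathUnionK1 (by tauto)
            hzx hwz.symm hzy hwx.symm hxy hwy
            (iff_of_true hxz.symm (by simp [pathUnionK1]))
            (iff_of_false (fun h => bwz h.symm) (by simp [pathUnionK1]))
            (iff_of_false (fun h => hyz h.symm) (by simp [pathUnionK1]))
            (iff_of_true bwx.symm (by simp [pathUnionK1]))
            (iff_of_false hnadj (by simp [pathUnionK1]))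
            (iff_of_false bwy (by simp [pathUnionK1]))
            x (by simp) y (by simp) hxy hnadj
        · -- ¬wx, wz, wy : path4 (x,z,w,y)
          exact use4 x z w y path4 (by tauto)
            hzx.symm hwx.symm hxy hwz.symm hzy hwy
            (iff_of_true hxz (by simp [path4]))
            (iff_of_false (fun h => bwx h.symm) (by simp [path4]))
            (iff_of_false hnadj (by simp [path4]))
            (iff_of_true bwz.symm (by simp [path4]))
            (iff_of_false (fun h => hyz h.symm) (by simp [path4]))
            (iff_of_true bwy (by simp [path4]))
            x (by simp) y (by simp) hxy hnadj
        · -- ¬wx, wz, ¬wy : P3 ∪ K1 (x,z,w,y)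
          exact use4 x z w y pathUnionK1 (by tauto)
            hzx.symm hwx.symm hxy hwz.symm hzy hwy
            (iff_of_true hxz (by simp [pathUnionK1]))
            (iff_of_false (fun h => bwx h.symm) (by simp [pathUnionK1]))
            (iff_of_false hnadj (by simp [pathUnionK1]))
            (iff_of_true bwz.symm (by simp [pathUnionK1]))
            (iff_of_false (fun h => hyz h.symm) (by simp [pathUnionK1]))
            (iff_of_false bwy (by simp [pathUnionK1]))
            x (by simp) y (by simp) hxy hnadj
        · exact absurd hor (by tauto)
        · exact absurd hor (by tauto)
      · -- N(x) = {z}, N(z) = {x} : contradiction with degree-2 vertex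
        exfalso
        push_neg at hw
        have hNx : ∀ t, G.Adj x t → t = z := by
          intro t ht
          by_contra htz
          have htx : t ≠ x := (G.ne_of_adj ht).symm
          have hty : t ≠ y := fun h => hnadj (h ▸ ht)
          exact (hw t htx hty htz).1 ht.symm
        have hNz : ∀ t, G.Adj z t → t = x := by
          intro t ht
          by_contra htx
          have htz : t ≠ z := (G.ne_of_adj ht).symm
          have hty : t ≠ y := fun h => hyz (h ▸ ht).symm
          exact (hw t htx hty htz).2 ht.symm
        have hvx : v ≠ x := by
          rintro rfl
          have h1 := hNx aa hva
          have h2 := hNx bb hvb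
          exact habne (h1.trans h2.symm)
        have hvz : v ≠ z := by
          rintro rfl
          have h1 := hNz aa hva
          have h2 := hNz bb hvb
          exact habne (h1.trans h2.symm)
        have hax : aa ≠ x := by
          rintro rfl
          exact hvz (hNx v hva.symm)
        have haz : aa ≠ z := by
          rintro rfl
          exact hvx (hNz v hva.symm)
        have hbx : bb ≠ x := by
          rintro rfl
          exact hvz (hNx v hvb.symm)
        have hbz : bb ≠ z := by
          rintro rfl
          exact hvx (hNz v hvb.symm)
        have hxnv : ¬ G.Adj x v := fun h => hvz (hNx v h)
        have hxna : ¬ G.Adj x aa := fun h => haz (hNx aa h)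
        have hxnb : ¬ G.Adj x bb := fun h => hbz (hNx bb h)
        have hkey : Fintype.card V ≤ G.degree x + G.degree v := by
          by_cases habb : G.Adj aa bb
          · exact use4 aa v bb x triangleUnionK1 (by tauto)
              (G.ne_of_adj hva).symm habne hax (G.ne_of_adj hvb) hvx hbx
              (iff_of_true hva.symm (by simp [triangleUnionK1]))
              (iff_of_true habb (by simp [triangleUnionK1]))
              (iff_of_false (fun h => hxna h.symm) (by simp [triangleUnionK1]))
              (iff_of_true hvb (by simp [triangleUnionK1]))
              (iff_of_false (fun h => hxnv h.symm) (by simp [triangleUnionK1]))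
              (iff_of_false (fun h => hxnb h.symm) (by simp [triangleUnionK1]))
              x (by simp) v (by simp) hvx.symm hxnv
          · exact use4 aa v bb x pathUnionK1 (by tauto)
              (G.ne_of_adj hva).symm habne hax (G.ne_of_adj hvb) hvx hbx
              (iff_of_true hva.symm (by simp [pathUnionK1]))
              (iff_of_false habb (by simp [pathUnionK1]))
              (iff_of_false (fun h => hxna h.symm) (by simp [pathUnionK1]))
              (iff_of_true hvb (by simp [pathUnionK1]))
              (iff_of_false (fun h => hxnv h.symm) (by simp [pathUnionK1]))
              (iff_of_false (fun h => hxnb h.symm) (by simp [pathUnionK1]))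
              x (by simp) v (by simp) hvx.symm hxnv
        have hdx : G.degree x ≤ 1 := by
          rw [← card_neighborFinset_eq_degree]
          have : G.neighborFinset x ⊆ {z} := by
            intro t ht
            rw [mem_neighborFinset] at ht
            simp [hNx t ht]
          calc (G.neighborFinset x).card ≤ ({z} : Finset V).card := Finset.card_le_card this
          _ = 1 := Finset.card_singleton _
        have hdv : G.degree v ≤ Fintype.card V - 2 := by
          rw [← card_neighborFinset_eq_degree]
          have hsub : G.neighborFinset v ⊆ Finset.univ \ {v, x} := by
            intro t ht
            rw [mem_neighborFinset] at ht
            simp only [Finset.mem_sdiff, Finset.mem_univ, Finset.mem_insert,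
              Finset.mem_singleton, true_and]
            push_neg
            constructor
            · exact fun h => G.irrefl (h ▸ ht)
            · rintro rfl
              exact hxnv ht.symm
          calc (G.neighborFinset v).card ≤ (Finset.univ \ {v, x} : Finset V).card :=
              Finset.card_le_card hsub
          _ = Fintype.card V - 2 := by
              rw [Finset.card_sdiff_of_subset (Finset.subset_univ _), Finset.card_univ,
                Finset.card_insert_of_notMem (by simp [hvx]), Finset.card_singleton]
        omega
  exact ore_hamiltonian G (by omega) hore
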